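/- For every positive integer n, the alternating sum of products of complementary factorials satisfies: ∑_{j=0}^{n-1} (-1)^j · j! · (n-1-j)! equals 0 if n is even, and equals 2·n·(n-1)!/(n+1) if n is odd (equality of rational numbers). -/
import Mathlib


/-- For every positive integer `n`, the alternating sum
`∑_{j=0}^{n-1} (-1)^j · j! · (n-1-j)!` equals `0` if `n` is even and
`2·n·(n-1)!/(n+1)` if `n` is odd (as rational numbers). -/
theorem alternating_sum_complementary_factorials (n : ℕ) (hn : 0 < n) :
    ∑ j ∈ Finset.range n,
        (-1 : ℚ) ^ j * (Nat.factorial j : ℚ) * (Nat.factorial (n - 1 - j) : ℚ) =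
      if Even n then 0 else 2 * n * (Nat.factorial (n - 1) : ℚ) / (n + 1) := by
  obtain ⟨m, rfl⟩ : ∃ m, n = m + 1 := ⟨n - 1, (Nat.succ_pred_eq_of_pos hn).symm⟩
  set g : ℕ → ℚ := fun j => (-1 : ℚ) ^ j * (Nat.factorial j : ℚ) * (Nat.factorial (m + 1 - j) : ℚ) with hg
  have hm2 : ((m : ℚ) + 2) ≠ 0 := by positivity
  have key : ∀ j ∈ Finset.range (m + 1),
      (-1 : ℚ) ^ j * (Nat.factorial j : ℚ) * (Nat.factorial (m + 1 - 1 - j) : ℚ)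
        = (g j - g (j + 1)) / ((m : ℚ) + 2) := by
    intro j hj
    rw [Finset.mem_range] at hj
    have hjm : j ≤ m := Nat.lt_succ_iff.mp hj
    have h1 : m + 1 - j = (m - j) + 1 := by omega
    have h2 : m + 1 - (j + 1) = m - j := by omega
    simp only [hg, h1, h2, Nat.factorial_succ, Nat.add_sub_cancel, pow_succ]
    have hc : ((m - j : ℕ) : ℚ) = (m : ℚ) - (j : ℚ) := by
      push_cast [Nat.cast_sub hjm]; ring
    push_cast [hc]
    field_simp
    ring
  rw [Finset.sum_congr rfl key, ← Finset.sum_div, Finset.sum_range_sub' g]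
  have hg0 : g 0 = (Nat.factorial (m + 1) : ℚ) := by simp [hg]
  have hgm : g (m + 1) = (-1 : ℚ) ^ (m + 1) * (Nat.factorial (m + 1) : ℚ) := by
    simp [hg]
  rw [hg0, hgm, Nat.add_sub_cancel]
  rcases Nat.even_or_odd m with he | ho
  · have h1 : ¬ Even (m + 1) := by simp [Nat.even_add_one, he]
    have h2 : (-1 : ℚ) ^ (m + 1) = -1 := by
      rw [Odd.neg_one_pow]; exact he.add_one
    rw [if_neg h1, h2, Nat.factorial_succ]
    push_cast
    field_simp
    ring
  · have h1 : Even (m + 1) := ho.add_one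
    have h2 : (-1 : ℚ) ^ (m + 1) = 1 := h1.neg_one_pow
    rw [if_pos h1, h2]
    ring
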